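/- Let F be a field, and let U be the subgroup of PSL₂(F) consisting of the classes of all matrices [[1, x],[0, 1]] with x ∈ F. For v ∈ F let h̄_v ∈ PSL₂(F) denote the class of the matrix [[v, −1],[1, 0]] ∈ SL₂(F). If v, z ∈ F satisfy h̄_v U h̄_v⁻¹ = h̄_z U h̄_z⁻¹ (as subgroups of PSL₂(F)), then v = z. -/

import Mathlib

open Matrix MatrixGroups

/-- The natural projection `SL₂(R) → PSL₂(R)`, sending a matrix to its class modulo
the center. -/
def pslmk {R : Type*} [CommRing R] :
    Matrix.SpecialLinearGroup (Fin 2) R →* Matrix.ProjectiveSpecialLinearGroup (Fin 2) R :=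
  QuotientGroup.mk' (Subgroup.center (Matrix.SpecialLinearGroup (Fin 2) R))

/-- Let `F` be a field and `U ≤ PSL₂(F)` the subgroup of classes of the matrices
`[[1, x], [0, 1]]`. For `v : F` let `h̄_v` be the class of `[[v, -1], [1, 0]]`. If
`h̄_v U h̄_v⁻¹ = h̄_z U h̄_z⁻¹` then `v = z`. -/
theorem conj_unipotent_inj (F : Type*) [Field F]
    (U : Subgroup (Matrix.ProjectiveSpecialLinearGroup (Fin 2) F))
    (hU : (U : Set (Matrix.ProjectiveSpecialLinearGroup (Fin 2) F)) =
      {g | ∃ x : F, ∃ h : Matrix.det !![1, x; 0, 1] = 1, g = pslmk ⟨!![1, x; 0, 1], h⟩})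
    (v z : F) (hv hz : Matrix.SpecialLinearGroup (Fin 2) F)
    (hhv : (hv : Matrix (Fin 2) (Fin 2) F) = !![v, -1; 1, 0])
    (hhz : (hz : Matrix (Fin 2) (Fin 2) F) = !![z, -1; 1, 0])
    (heq : Subgroup.map (MulAut.conj (pslmk hv)).toMonoidHom U =
           Subgroup.map (MulAut.conj (pslmk hz)).toMonoidHom U) :
    v = z := by
  have hdet1 : Matrix.det !![(1:F), 1; 0, 1] = 1 := by simp
  set u1 : Matrix.SpecialLinearGroup (Fin 2) F := ⟨!![1,1;0,1], hdet1⟩ with hu1def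
  have hu1 : pslmk u1 ∈ U := by
    have : pslmk u1 ∈ (U : Set _) := by
      rw [hU]; exact ⟨1, hdet1, rfl⟩
    exact this
  have hmem : (MulAut.conj (pslmk hv)).toMonoidHom (pslmk u1) ∈
      Subgroup.map (MulAut.conj (pslmk hz)).toMonoidHom U := by
    rw [← heq]; exact Subgroup.mem_map_of_mem _ hu1
  obtain ⟨g, hgU, hgeq⟩ := hmem
  have hgU' : g ∈ (U : Set _) := hgU
  rw [hU] at hgU'
  obtain ⟨x, hx, rfl⟩ := hgU'
  set ux : Matrix.SpecialLinearGroup (Fin 2) F := ⟨!![1,x;0,1], hx⟩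
  have hgeq' : pslmk (hz * ux * hz⁻¹) = pslmk (hv * u1 * hv⁻¹) := by
    simpa [MulAut.conj_apply, _root_.map_mul, map_inv] using hgeq
  rw [pslmk, QuotientGroup.mk'_eq_mk'] at hgeq'
  obtain ⟨c, hc, hceq⟩ := hgeq'
  obtain ⟨r, hr2, hrc⟩ := Matrix.SpecialLinearGroup.mem_center_iff.mp hc
  have hr2' : r ^ 2 = 1 := by simpa using hr2
  have E : ((hz * ux * hz⁻¹ * c : Matrix.SpecialLinearGroup (Fin 2) F) :
      Matrix (Fin 2) (Fin 2) F) = ((hv * u1 * hv⁻¹ : Matrix.SpecialLinearGroup (Fin 2) F) :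
      Matrix (Fin 2) (Fin 2) F) := by rw [hceq]
  have hcm : (c : Matrix (Fin 2) (Fin 2) F) = Matrix.scalar (Fin 2) r := by rw [hrc]
  have hzi : ((hz⁻¹ : Matrix.SpecialLinearGroup (Fin 2) F) : Matrix (Fin 2) (Fin 2) F)
      = !![0, 1; -1, z] := by
    rw [Matrix.SpecialLinearGroup.coe_inv, hhz, Matrix.adjugate_fin_two]
    norm_num
  have hvi : ((hv⁻¹ : Matrix.SpecialLinearGroup (Fin 2) F) : Matrix (Fin 2) (Fin 2) F)
      = !![0, 1; -1, v] := by
    rw [Matrix.SpecialLinearGroup.coe_inv, hhv, Matrix.adjugate_fin_two]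
    norm_num
  simp only [Matrix.SpecialLinearGroup.coe_mul, hzi, hvi, hhz, hhv, hcm, hu1def] at E
  rw [← Matrix.ext_iff] at E
  have e1 := E 1 0
  have e2 := E 0 0
  have e3 := E 1 1
  have hvu1 := Matrix.SpecialLinearGroup.coe_mul hv u1
  rw [hu1def] at hvu1
  simp [ux, hvu1, Matrix.SpecialLinearGroup.coe_mul, hhv, Matrix.vecMul, dotProduct, Matrix.mul_apply, Fin.sum_univ_succ, Matrix.scalar_apply, Matrix.one_apply] at e1 e2 e3
  -- now algebra
  have hfac : (r - 1) * (r + 1) = 0 := by ring_nf; linear_combination hr2'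
  rcases mul_eq_zero.mp hfac with h1 | h1
  · have hr1 : r = 1 := by linear_combination h1
    subst hr1
    linear_combination z * e1 - e3
  · have hr1 : r = -1 := by linear_combination h1
    subst hr1
    have h4 : (2:F) * 2 = 0 := by linear_combination -e2 - e3
    have h2 : (2:F) = 0 := mul_self_eq_zero.mp h4
    linear_combination -e3 + z * e1 - h2
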